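/- Let M be an n×n real matrix with constants c > 0, λ > 0 such that ‖exp(tM)‖ ≤ c·e^{−λt} for all t ≥ 0, and let h : [0, ∞) → ℝⁿ be continuous with ∫₀^∞ ‖h(t)‖² dt < ∞. Then for every t ≥ 0 the integral s(t) = ∫_t^∞ exp((τ − t)·Mᵀ)·h(τ) dτ converges absolutely, the resulting function s satisfies ∫₀^∞ ‖s(t)‖² dt < ∞, and s is differentiable on [0, ∞) with ṡ(t) + Mᵀ·s(t) + h(t) = 0 for every t ≥ 0. -/

import Mathlib

open Matrix MeasureTheory
open scoped NNReal ENNReal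

attribute [local instance] Matrix.linftyOpNormedAddCommGroup
  Matrix.linftyOpNormedRing Matrix.linftyOpNormedAlgebra

lemma aux_norm_transpose {n : ℕ} (B : Matrix (Fin n) (Fin n) ℝ) : ‖Bᵀ‖ ≤ n * ‖B‖ := by
  have h1 : ‖Bᵀ‖₊ ≤ (n : ℝ≥0) * ‖B‖₊ := by
    rw [Matrix.linfty_opNNNorm_def]
    refine Finset.sup_le fun j _ => ?_
    have key : ∀ i : Fin n, ‖Bᵀ j i‖₊ ≤ ‖B‖₊ := by
      intro i
      rw [Matrix.linfty_opNNNorm_def]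
      calc ‖Bᵀ j i‖₊ = ‖B i j‖₊ := rfl
        _ ≤ ∑ j', ‖B i j'‖₊ :=
          Finset.single_le_sum (f := fun j' => ‖B i j'‖₊) (fun _ _ => zero_le)
            (Finset.mem_univ j)
        _ ≤ _ := Finset.le_sup (f := fun i => ∑ j', ‖B i j'‖₊) (Finset.mem_univ i)
    calc ∑ i, ‖Bᵀ j i‖₊ ≤ ∑ _i : Fin n, ‖B‖₊ := Finset.sum_le_sum fun i _ => key i
      _ = (n : ℝ≥0) * ‖B‖₊ := by simp [Finset.sum_const, nsmul_eq_mul]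
  calc ‖Bᵀ‖ = ((‖Bᵀ‖₊ : ℝ≥0) : ℝ) := rfl
    _ ≤ (((n : ℝ≥0) * ‖B‖₊ : ℝ≥0) : ℝ) := by exact_mod_cast h1
    _ = n * ‖B‖ := by push_cast; rfl

lemma aux_mp_sub_left (t : ℝ) : MeasurePreserving (fun x => t - x) (volume : Measure ℝ) volume := by
  have h1 : MeasurePreserving (fun x : ℝ => -x) (volume : Measure ℝ) volume :=
    ⟨measurable_neg, Measure.map_neg_eq_self volume⟩
  have h2 : MeasurePreserving (fun x : ℝ => t + x) (volume : Measure ℝ) volume :=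
    measurePreserving_add_left volume t
  simpa [Function.comp_def, sub_eq_add_neg] using h2.comp h1

lemma aux_shift_int (f : ℝ → ℝ≥0∞) (hf : Measurable f) (t : ℝ) :
    ∫⁻ x in Set.Ici t, f (x - t) = ∫⁻ x in Set.Ici 0, f x := by
  have := (measurePreserving_sub_right (volume : Measure ℝ) t).setLIntegral_comp_preimage
    (measurableSet_Ici (a := (0:ℝ))) hf
  have hpre : (· - t) ⁻¹' (Set.Ici (0:ℝ)) = Set.Ici t := by
    ext x; simp [sub_nonneg]
  rwa [hpre] at this

lemma aux_refl_int (f : ℝ → ℝ≥0∞) (hf : Measurable f) (t : ℝ) :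
    ∫⁻ x in Set.Iic t, f (t - x) = ∫⁻ x in Set.Ici 0, f x := by
  have := (aux_mp_sub_left t).setLIntegral_comp_preimage
    (measurableSet_Ici (a := (0:ℝ))) hf
  have hpre : (fun x => t - x) ⁻¹' (Set.Ici (0:ℝ)) = Set.Iic t := by
    ext x; simp [sub_nonneg]
  rwa [hpre] at this

lemma aux_rpow_half_sq (x : ℝ≥0∞) : (x ^ (1/2 : ℝ)) ^ 2 = x := by
  rw [← ENNReal.rpow_natCast (x ^ (1/2 : ℝ)) 2, ← ENNReal.rpow_mul]
  norm_num

noncomputable def auxLmv (n : ℕ) :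
    Matrix (Fin n) (Fin n) ℝ →L[ℝ] ((Fin n → ℝ) →L[ℝ] (Fin n → ℝ)) :=
  LinearMap.toContinuousLinearMap
    { toFun := fun A => LinearMap.toContinuousLinearMap (Matrix.mulVecLin A)
      map_add' := by intro A B; ext v i; simp [Matrix.add_mulVec]
      map_smul' := by intro r A; ext v i; simp [Matrix.smul_mulVec] }

set_option maxHeartbeats 1000000 in
theorem backward_adjoint_equation_solution
    {n : ℕ} (M : Matrix (Fin n) (Fin n) ℝ)
    (c lam : ℝ) (hc : 0 < c) (hlam : 0 < lam)
    (hstab : ∀ t : ℝ, 0 ≤ t →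
      ‖NormedSpace.exp (t • M)‖ ≤ c * Real.exp (-lam * t))
    (h : ℝ → Fin n → ℝ) (hcont : ContinuousOn h (Set.Ici (0 : ℝ)))
    (hl2 : ∫⁻ t in Set.Ici (0 : ℝ), ENNReal.ofReal (‖h t‖ ^ 2) < ⊤)
    (s : ℝ → Fin n → ℝ)
    (hs : ∀ t : ℝ,
      s t = ∫ τ in Set.Ici t, NormedSpace.exp ((τ - t) • Mᵀ) *ᵥ h τ) :
    (∀ t : ℝ, 0 ≤ t →
        IntegrableOn (fun τ => NormedSpace.exp ((τ - t) • Mᵀ) *ᵥ h τ)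
          (Set.Ici t)) ∧
      (∫⁻ t in Set.Ici (0 : ℝ), ENNReal.ofReal (‖s t‖ ^ 2) < ⊤) ∧
      (∀ t : ℝ, 0 ≤ t →
        HasDerivWithinAt s (-(Mᵀ *ᵥ s t) - h t) (Set.Ici (0 : ℝ)) t) := by
  classical
  set c' : ℝ := n * c with hc'def
  have hc' : (0:ℝ) ≤ c' := by positivity
  -- norm bound for the transposed semigroup
  have hEb : ∀ u : ℝ, 0 ≤ u → ‖NormedSpace.exp (u • Mᵀ)‖ ≤ c' * Real.exp (-lam * u) := by
    intro u hu
    rw [← Matrix.transpose_smul, Matrix.exp_transpose]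
    calc ‖(NormedSpace.exp (u • M))ᵀ‖ ≤ n * ‖NormedSpace.exp (u • M)‖ :=
          aux_norm_transpose _
      _ ≤ n * (c * Real.exp (-lam * u)) :=
          mul_le_mul_of_nonneg_left (hstab u hu) (Nat.cast_nonneg n)
      _ = c' * Real.exp (-lam * u) := by rw [hc'def]; ring
  set fI : ℝ → ℝ → (Fin n → ℝ) :=
    fun t τ => NormedSpace.exp ((τ - t) • Mᵀ) *ᵥ h τ with hfIdef
  have hnormb : ∀ t τ : ℝ, t ≤ τ →
      ‖fI t τ‖ ≤ c' * (Real.exp (-lam * (τ - t)) * ‖h τ‖) := by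
    intro t τ htτ
    calc ‖fI t τ‖ ≤ ‖NormedSpace.exp ((τ - t) • Mᵀ)‖ * ‖h τ‖ :=
          Matrix.linfty_opNorm_mulVec _ _
      _ ≤ (c' * Real.exp (-lam * (τ - t))) * ‖h τ‖ :=
          mul_le_mul_of_nonneg_right (hEb _ (sub_nonneg.2 htτ)) (norm_nonneg _)
      _ = c' * (Real.exp (-lam * (τ - t)) * ‖h τ‖) := by ring
  have haesm : ∀ t : ℝ, 0 ≤ t →
      AEStronglyMeasurable (fI t) (volume.restrict (Set.Ici t)) := by
    intro t ht
    have hE : Continuous fun τ : ℝ => NormedSpace.exp ((τ - t) • Mᵀ) :=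
      NormedSpace.exp_continuous.comp (by fun_prop)
    have hh : AEStronglyMeasurable h (volume.restrict (Set.Ici t)) :=
      (hcont.mono (Set.Ici_subset_Ici.2 ht)).aestronglyMeasurable measurableSet_Ici
    haveI : TopologicalSpace.PseudoMetrizableSpace (Matrix (Fin n) (Fin n) ℝ) :=
      inferInstanceAs (TopologicalSpace.PseudoMetrizableSpace (Fin n → Fin n → ℝ))
    exact (Continuous.matrix_mulVec continuous_fst continuous_snd).comp_aestronglyMeasurable
      (hE.aestronglyMeasurable.prodMk hh)
  set C1 : ℝ≥0∞ := ∫⁻ x in Set.Ici (0:ℝ), ENNReal.ofReal (Real.exp (-lam * x)) with hC1def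
  have hmexp : ∀ r : ℝ, Measurable fun x : ℝ => ENNReal.ofReal (Real.exp (r * x)) := by
    intro r
    exact ENNReal.measurable_ofReal.comp ((Real.continuous_exp.comp (by fun_prop)).measurable)
  have hC1shift : ∀ t : ℝ,
      ∫⁻ τ in Set.Ici t, ENNReal.ofReal (Real.exp (-lam * (τ - t))) = C1 := by
    intro t
    exact aux_shift_int (fun x => ENNReal.ofReal (Real.exp (-lam * x))) (hmexp (-lam)) t
  have hC1top : C1 < ⊤ := by
    have hint : IntegrableOn (fun x : ℝ => Real.exp (-lam * x)) (Set.Ioi 0) :=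
      exp_neg_integrableOn_Ioi 0 hlam
    have := hint.2
    rw [hC1def, ← MeasureTheory.restrict_Ioi_eq_restrict_Ici]
    refine lt_of_eq_of_lt ?_ this
    refine lintegral_congr fun x => ?_
    rw [← ofReal_norm, Real.norm_eq_abs, abs_of_pos (Real.exp_pos _)]
  set K : ℝ≥0∞ := ∫⁻ t in Set.Ici (0:ℝ), ENNReal.ofReal (‖h t‖ ^ 2) with hKdef
  have hKtop : K < ⊤ := hl2
  set I2 : ℝ → ℝ≥0∞ :=
    fun t => ∫⁻ τ in Set.Ici t, ENNReal.ofReal (Real.exp (-lam * (τ - t)) * ‖h τ‖ ^ 2)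
    with hI2def
  have hI2K : ∀ t : ℝ, 0 ≤ t → I2 t ≤ K := by
    intro t ht
    calc I2 t ≤ ∫⁻ τ in Set.Ici t, ENNReal.ofReal (‖h τ‖ ^ 2) := by
          refine lintegral_mono_ae ((ae_restrict_mem measurableSet_Ici).mono fun τ hτ => ?_)
          refine ENNReal.ofReal_le_ofReal ?_
          have h1 : Real.exp (-lam * (τ - t)) ≤ 1 := by
            rw [Real.exp_le_one_iff]
            have : (0:ℝ) ≤ τ - t := sub_nonneg.2 hτ
            nlinarith
          nlinarith [sq_nonneg ‖h τ‖, Real.exp_pos (-lam * (τ - t))]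
      _ ≤ K := lintegral_mono_set (Set.Ici_subset_Ici.2 ht)
  have hI2top : ∀ t : ℝ, 0 ≤ t → I2 t < ⊤ := fun t ht => (hI2K t ht).trans_lt hKtop
  -- Hölder
  have hholder : ∀ t : ℝ, 0 ≤ t →
      (∫⁻ τ in Set.Ici t, ENNReal.ofReal (Real.exp (-lam * (τ - t)) * ‖h τ‖))
        ≤ C1 ^ (1/2 : ℝ) * (I2 t) ^ (1/2 : ℝ) := by
    intro t ht
    set e : ℝ → ℝ := fun τ => Real.exp (-(lam/2) * (τ - t)) with hedef
    have hee : ∀ τ, e τ * e τ = Real.exp (-lam * (τ - t)) := by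
      intro τ
      rw [hedef, ← Real.exp_add]
      ring_nf
    have hsplit : ∀ τ, ENNReal.ofReal (Real.exp (-lam * (τ - t)) * ‖h τ‖)
        = ((fun τ => ENNReal.ofReal (e τ)) * fun τ => ENNReal.ofReal (e τ * ‖h τ‖)) τ := by
      intro τ
      have : Real.exp (-lam * (τ - t)) * ‖h τ‖ = e τ * (e τ * ‖h τ‖) := by
        rw [← mul_assoc, hee]
      rw [this, Pi.mul_apply, ← ENNReal.ofReal_mul (Real.exp_pos _).le]
    have hf1 : AEMeasurable (fun τ => ENNReal.ofReal (e τ))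
        (volume.restrict (Set.Ici t)) := by
      exact (ENNReal.measurable_ofReal.comp
        ((Real.continuous_exp.comp (by fun_prop)).measurable)).aemeasurable
    have hg1 : AEMeasurable (fun τ => ENNReal.ofReal (e τ * ‖h τ‖))
        (volume.restrict (Set.Ici t)) := by
      have hh : AEMeasurable (fun τ => ‖h τ‖) (volume.restrict (Set.Ici t)) :=
        (((hcont.mono (Set.Ici_subset_Ici.2 ht)).norm).aestronglyMeasurable
          measurableSet_Ici).aemeasurable
      exact ENNReal.measurable_ofReal.comp_aemeasurable
        (((Real.continuous_exp.comp (by fun_prop)).measurable).aemeasurable.mul hh)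
    have hx2 : ∀ x : ℝ≥0∞, x ^ (2:ℝ) = x * x := by
      intro x
      rw [show (2:ℝ) = ((2:ℕ):ℝ) by norm_num, ENNReal.rpow_natCast, sq]
    calc (∫⁻ τ in Set.Ici t, ENNReal.ofReal (Real.exp (-lam * (τ - t)) * ‖h τ‖))
        = ∫⁻ τ in Set.Ici t,
            ((fun τ => ENNReal.ofReal (e τ)) * fun τ => ENNReal.ofReal (e τ * ‖h τ‖)) τ :=
          lintegral_congr hsplit
      _ ≤ (∫⁻ τ in Set.Ici t, (ENNReal.ofReal (e τ)) ^ (2:ℝ)) ^ (1/2:ℝ) *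
          (∫⁻ τ in Set.Ici t, (ENNReal.ofReal (e τ * ‖h τ‖)) ^ (2:ℝ)) ^ (1/2:ℝ) :=
          ENNReal.lintegral_mul_le_Lp_mul_Lq _ Real.HolderConjugate.two_two hf1 hg1
      _ = C1 ^ (1/2 : ℝ) * (I2 t) ^ (1/2 : ℝ) := by
          congr 1
          · congr 1
            rw [← hC1shift t]
            refine lintegral_congr fun τ => ?_
            rw [hx2, ← ENNReal.ofReal_mul (Real.exp_pos _).le, hee]
          · congr 1
            rw [hI2def]
            refine lintegral_congr fun τ => ?_
            rw [hx2, ← ENNReal.ofReal_mul (by positivity)]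
            congr 1
            have : e τ * ‖h τ‖ * (e τ * ‖h τ‖) = (e τ * e τ) * ‖h τ‖^2 := by ring
            rw [this, hee]
  -- main L¹ chain
  have hchain : ∀ t : ℝ, 0 ≤ t →
      (∫⁻ τ in Set.Ici t, (‖fI t τ‖₊ : ℝ≥0∞))
        ≤ ENNReal.ofReal c' * (C1 ^ (1/2:ℝ) * (I2 t) ^ (1/2:ℝ)) := by
    intro t ht
    calc (∫⁻ τ in Set.Ici t, (‖fI t τ‖₊ : ℝ≥0∞))
        ≤ ∫⁻ τ in Set.Ici t,
            ENNReal.ofReal c' * ENNReal.ofReal (Real.exp (-lam * (τ - t)) * ‖h τ‖) := by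
          refine lintegral_mono_ae ((ae_restrict_mem measurableSet_Ici).mono fun τ hτ => ?_)
          rw [← ENNReal.ofReal_mul hc', ← enorm_eq_nnnorm, ← ofReal_norm]
          exact ENNReal.ofReal_le_ofReal (hnormb t τ hτ)
      _ = ENNReal.ofReal c' *
          ∫⁻ τ in Set.Ici t, ENNReal.ofReal (Real.exp (-lam * (τ - t)) * ‖h τ‖) :=
          lintegral_const_mul' _ _ ENNReal.ofReal_ne_top
      _ ≤ ENNReal.ofReal c' * (C1 ^ (1/2:ℝ) * (I2 t) ^ (1/2:ℝ)) :=
          mul_le_mul_right (hholder t ht) _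
  have hrpowfin : ∀ x : ℝ≥0∞, x ≠ ⊤ → x ^ (1/2:ℝ) < ⊤ := by
    intro x hx
    exact ENNReal.rpow_lt_top_of_nonneg (by norm_num) hx
  have part1 : ∀ t : ℝ, 0 ≤ t → IntegrableOn (fI t) (Set.Ici t) := by
    intro t ht
    refine ⟨haesm t ht, ?_⟩
    rw [HasFiniteIntegral]
    refine (hchain t ht).trans_lt ?_
    exact ENNReal.mul_lt_top ENNReal.ofReal_lt_top
      (ENNReal.mul_lt_top (hrpowfin _ hC1top.ne) (hrpowfin _ (hI2top t ht).ne))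
  refine ⟨part1, ?_, ?_⟩
  · -- square integrability of s
    have hsb : ∀ t : ℝ, 0 ≤ t →
        ENNReal.ofReal (‖s t‖ ^ 2) ≤ (ENNReal.ofReal c')^2 * C1 * I2 t := by
      intro t ht
      have h1 : ENNReal.ofReal ‖s t‖
          ≤ ENNReal.ofReal c' * (C1 ^ (1/2:ℝ) * (I2 t) ^ (1/2:ℝ)) := by
        rw [hs t, ofReal_norm]
        exact (enorm_integral_le_lintegral_enorm _).trans (hchain t ht)
      calc ENNReal.ofReal (‖s t‖ ^ 2) = (ENNReal.ofReal ‖s t‖) ^ 2 :=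
            ENNReal.ofReal_pow (norm_nonneg _) 2
        _ ≤ (ENNReal.ofReal c' * (C1 ^ (1/2:ℝ) * (I2 t) ^ (1/2:ℝ))) ^ 2 :=
            pow_le_pow_left' h1 2
        _ = (ENNReal.ofReal c')^2 * C1 * I2 t := by
            rw [mul_pow, mul_pow, aux_rpow_half_sq, aux_rpow_half_sq, mul_assoc]
    have hn : AEMeasurable (fun τ => ‖h τ‖) (volume.restrict (Set.Ici (0:ℝ))) :=
      ((hcont.norm).aestronglyMeasurable measurableSet_Ici).aemeasurable
    have hhn2 : AEMeasurable (fun τ => ENNReal.ofReal (‖h τ‖^2))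
        (volume.restrict (Set.Ici (0:ℝ))) := by
      refine ENNReal.measurable_ofReal.comp_aemeasurable ?_
      simpa [pow_two, Pi.mul_def] using hn.mul hn
    set P : ℝ → ℝ≥0∞ := (Set.Ici (0:ℝ)).indicator (fun τ => ENNReal.ofReal (‖h τ‖^2))
      with hPdef
    have hP : AEMeasurable P volume := (aemeasurable_indicator_iff measurableSet_Ici).2 hhn2
    obtain ⟨P₀, hP₀, hPeq⟩ : ∃ P₀ : ℝ → ℝ≥0∞, Measurable P₀ ∧ P =ᵐ[volume] P₀ :=
      ⟨hP.mk _, hP.measurable_mk, hP.ae_eq_mk⟩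
    set S : Set (ℝ × ℝ) := {q : ℝ × ℝ | 0 ≤ q.1 ∧ q.1 ≤ q.2} with hSdef
    have hSm : MeasurableSet S :=
      (measurableSet_le measurable_const measurable_fst).inter
        (measurableSet_le measurable_fst measurable_snd)
    set G : ℝ × ℝ → ℝ≥0∞ :=
      S.indicator (fun q => ENNReal.ofReal (Real.exp (-lam * (q.2 - q.1))) * P₀ q.2)
      with hGdef
    have hGm : Measurable G := by
      refine Measurable.indicator ?_ hSm
      exact (ENNReal.measurable_ofReal.comp
        ((Real.continuous_exp.comp (by fun_prop)).measurable)).mul (hP₀.comp measurable_snd)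
    have hI2G : ∀ t : ℝ, 0 ≤ t → I2 t = ∫⁻ τ, G (t, τ) := by
      intro t ht
      have e1 : I2 t = ∫⁻ τ in Set.Ici t,
          ENNReal.ofReal (Real.exp (-lam * (τ - t))) * P τ := by
        rw [hI2def]
        refine setLIntegral_congr_fun measurableSet_Ici (fun τ hτ => ?_)
        rw [hPdef, Set.indicator_of_mem (Set.mem_Ici.2 (le_trans ht hτ)),
          ENNReal.ofReal_mul (Real.exp_pos _).le]
      have e2 : (∫⁻ τ in Set.Ici t, ENNReal.ofReal (Real.exp (-lam * (τ - t))) * P τ)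
          = ∫⁻ τ in Set.Ici t, ENNReal.ofReal (Real.exp (-lam * (τ - t))) * P₀ τ := by
        refine lintegral_congr_ae ?_
        have hres : P =ᵐ[volume.restrict (Set.Ici t)] P₀ :=
          hPeq.filter_mono (ae_mono Measure.restrict_le_self)
        exact hres.mono fun τ hτ => by dsimp only; rw [hτ]
      have e3 : (∫⁻ τ in Set.Ici t, ENNReal.ofReal (Real.exp (-lam * (τ - t))) * P₀ τ)
          = ∫⁻ τ, G (t, τ) := by
        rw [← lintegral_indicator measurableSet_Ici _]
        refine lintegral_congr fun τ => ?_
        by_cases hτ : t ≤ τ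
        · rw [Set.indicator_of_mem (Set.mem_Ici.2 hτ), hGdef,
            Set.indicator_of_mem (show (t,τ) ∈ S from ⟨ht, hτ⟩)]
        · rw [Set.indicator_of_notMem (by simpa using hτ), hGdef,
            Set.indicator_of_notMem (fun hc => hτ hc.2)]
      rw [e1, e2, e3]
    have hswap : (∫⁻ t, ∫⁻ τ, G (t, τ)) = ∫⁻ τ, ∫⁻ t, G (t, τ) := by
      have hunc : AEMeasurable (Function.uncurry (Function.curry G))
          ((volume : Measure ℝ).prod volume) := by
        rw [Function.uncurry_curry]; exact hGm.aemeasurable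
      exact lintegral_lintegral_swap hunc
    have hinner : ∀ τ : ℝ, (∫⁻ t, G (t, τ)) ≤ C1 * P₀ τ := by
      intro τ
      have e4 : (fun t => G (t, τ)) = (Set.Icc (0:ℝ) τ).indicator
          (fun t => ENNReal.ofReal (Real.exp (-lam * (τ - t))) * P₀ τ) := by
        funext t
        by_cases htm : 0 ≤ t ∧ t ≤ τ
        · rw [hGdef, Set.indicator_of_mem (show (t,τ) ∈ S from ⟨htm.1, htm.2⟩),
            Set.indicator_of_mem (Set.mem_Icc.2 htm)]
        · rw [hGdef, Set.indicator_of_notMem (fun hc => htm ⟨hc.1, hc.2⟩),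
            Set.indicator_of_notMem (fun hc => htm (Set.mem_Icc.1 hc))]
      rw [e4, lintegral_indicator measurableSet_Icc _]
      calc (∫⁻ t in Set.Icc (0:ℝ) τ, ENNReal.ofReal (Real.exp (-lam * (τ - t))) * P₀ τ)
          = (∫⁻ t in Set.Icc (0:ℝ) τ, ENNReal.ofReal (Real.exp (-lam * (τ - t)))) * P₀ τ :=
            lintegral_mul_const _ (ENNReal.measurable_ofReal.comp
              ((Real.continuous_exp.comp (by fun_prop)).measurable))
        _ ≤ C1 * P₀ τ := by
            refine mul_le_mul_left ?_ _
            calc (∫⁻ t in Set.Icc (0:ℝ) τ, ENNReal.ofReal (Real.exp (-lam * (τ - t))))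
                ≤ ∫⁻ t in Set.Iic τ, ENNReal.ofReal (Real.exp (-lam * (τ - t))) :=
                  lintegral_mono_set Set.Icc_subset_Iic_self
              _ = C1 := aux_refl_int (fun x => ENNReal.ofReal (Real.exp (-lam * x)))
                  (hmexp (-lam)) τ
    have hPK : (∫⁻ τ, P₀ τ) = K := by
      rw [← lintegral_congr_ae hPeq, hPdef, lintegral_indicator measurableSet_Ici _, hKdef]
    calc (∫⁻ t in Set.Ici (0:ℝ), ENNReal.ofReal (‖s t‖^2))
        ≤ ∫⁻ t in Set.Ici (0:ℝ), (ENNReal.ofReal c')^2 * C1 * (∫⁻ τ, G (t, τ)) := by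
          refine lintegral_mono_ae ((ae_restrict_mem measurableSet_Ici).mono fun t ht => ?_)
          rw [← hI2G t ht]
          exact hsb t ht
      _ ≤ ∫⁻ t, (ENNReal.ofReal c')^2 * C1 * (∫⁻ τ, G (t, τ)) :=
          setLIntegral_le_lintegral _ _
      _ = (ENNReal.ofReal c')^2 * C1 * ∫⁻ t, ∫⁻ τ, G (t, τ) :=
          lintegral_const_mul' _ _
            (ENNReal.mul_ne_top (ENNReal.pow_ne_top ENNReal.ofReal_ne_top) hC1top.ne)
      _ = (ENNReal.ofReal c')^2 * C1 * ∫⁻ τ, ∫⁻ t, G (t, τ) := by rw [hswap]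
      _ ≤ (ENNReal.ofReal c')^2 * C1 * ∫⁻ τ, C1 * P₀ τ :=
          mul_le_mul_right (lintegral_mono hinner) _
      _ = (ENNReal.ofReal c')^2 * C1 * (C1 * K) := by
          rw [lintegral_const_mul' _ _ hC1top.ne, hPK]
      _ < ⊤ := by
          refine ENNReal.mul_lt_top (ENNReal.mul_lt_top ?_ hC1top)
            (ENNReal.mul_lt_top hC1top hKtop)
          exact ENNReal.pow_lt_top ENNReal.ofReal_lt_top
  · -- the backward differential equation
    intro t ht
    set f0 : ℝ → (Fin n → ℝ) := fun τ => NormedSpace.exp (τ • Mᵀ) *ᵥ h τ with hf0def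
    have hsub0 : fI 0 = f0 := by
      funext τ; rw [hfIdef, hf0def]; simp
    have hf0I : IntegrableOn f0 (Set.Ici (0:ℝ)) := hsub0 ▸ part1 0 le_rfl
    have hf0Ici : ∀ u : ℝ, 0 ≤ u → IntegrableOn f0 (Set.Ici u) := fun u hu =>
      hf0I.mono_set (Set.Ici_subset_Ici.2 hu)
    have hf0cont : ContinuousOn f0 (Set.Ici (0:ℝ)) := by
      have hE : Continuous fun τ : ℝ => NormedSpace.exp (τ • Mᵀ) :=
        NormedSpace.exp_continuous.comp (by fun_prop)
      exact (Continuous.matrix_mulVec continuous_fst continuous_snd).comp_continuousOn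
        (hE.continuousOn.prodMk hcont)
    set w : ℝ → (Fin n → ℝ) := fun u => ∫ τ in Set.Ici u, f0 τ with hwdef
    -- commutation basics
    have hcomm : ∀ a b : ℝ, NormedSpace.exp ((a + b) • Mᵀ)
        = NormedSpace.exp (a • Mᵀ) * NormedSpace.exp (b • Mᵀ) := by
      intro a b
      rw [add_smul]
      exact NormedSpace.exp_add_of_commute (Commute.smul_left (Commute.smul_right rfl a) b).symm
    have hE0 : ∀ u : ℝ, NormedSpace.exp ((-u) • Mᵀ) * NormedSpace.exp (u • Mᵀ) = 1 := by
      intro u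
      rw [← hcomm (-u) u, neg_add_cancel, zero_smul, NormedSpace.exp_zero]
    -- s u = exp((-u)•Mᵀ) *ᵥ w u on Ici 0
    have hsw : ∀ u : ℝ, 0 ≤ u →
        s u = NormedSpace.exp ((-u) • Mᵀ) *ᵥ w u := by
      intro u hu
      rw [hs u]
      have h1 : ∀ τ : ℝ, NormedSpace.exp ((τ - u) • Mᵀ) *ᵥ h τ
          = NormedSpace.exp ((-u) • Mᵀ) *ᵥ f0 τ := by
        intro τ
        rw [hf0def]
        dsimp only
        rw [Matrix.mulVec_mulVec, ← hcomm (-u) τ]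
        ring_nf
      calc (∫ τ in Set.Ici u, NormedSpace.exp ((τ - u) • Mᵀ) *ᵥ h τ)
          = ∫ τ in Set.Ici u, NormedSpace.exp ((-u) • Mᵀ) *ᵥ f0 τ :=
            integral_congr_ae (ae_of_all _ h1)
        _ = NormedSpace.exp ((-u) • Mᵀ) *ᵥ w u :=
            (auxLmv n (NormedSpace.exp ((-u) • Mᵀ))).integral_comp_comm (hf0Ici u hu)
    -- decomposition of w
    have hwsplit : ∀ u : ℝ, 0 ≤ u → w u = w 0 - ∫ τ in (0:ℝ)..u, f0 τ := by
      intro u hu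
      have hdisj : Disjoint (Set.Ico (0:ℝ) u) (Set.Ici u) :=
        Set.disjoint_left.2 fun x hx hx' => absurd hx.2 (not_lt.2 hx')
      have hunion : Set.Ico (0:ℝ) u ∪ Set.Ici u = Set.Ici 0 := Set.Ico_union_Ici_eq_Ici hu
      have hIcoI : IntegrableOn f0 (Set.Ico (0:ℝ) u) :=
        hf0I.mono_set (by rw [← hunion]; exact Set.subset_union_left)
      have hsum := setIntegral_union hdisj measurableSet_Ici hIcoI (hf0Ici u hu)
      rw [hunion] at hsum
      have hIoc : (∫ τ in (0:ℝ)..u, f0 τ) = ∫ τ in Set.Ico (0:ℝ) u, f0 τ := by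
        rw [intervalIntegral.integral_of_le hu, integral_Ioc_eq_integral_Ioo, ← integral_Ico_eq_integral_Ioo]
      rw [hIoc, hwdef]
      dsimp only
      rw [hsum]
      abel
    -- FTC
    have haesm0 : AEStronglyMeasurable f0 (volume.restrict (Set.Ici (0:ℝ))) := hf0I.1
    have hFTC : ∀ u : ℝ, 0 ≤ u →
        HasDerivWithinAt (fun r => ∫ τ in (0:ℝ)..r, f0 τ) (f0 u) (Set.Ici (0:ℝ)) u := by
      intro u hu
      have hii : IntervalIntegrable f0 volume 0 u := by
        refine (hf0I.mono_set ?_).intervalIntegrable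
        rw [Set.uIcc_of_le hu]
        exact Set.Icc_subset_Ici_self
      rcases eq_or_lt_of_le hu with rfl | hu'
      · exact intervalIntegral.integral_hasDerivWithinAt_right hii
          ⟨Set.Ici 0, Filter.mem_of_superset self_mem_nhdsWithin Set.Ioi_subset_Ici_self,
            haesm0⟩
          ((hf0cont 0 (Set.mem_Ici.2 le_rfl)).mono Set.Ioi_subset_Ici_self)
      · have hmem : Set.Ici (0:ℝ) ∈ nhds u :=
          Filter.mem_of_superset (Ioi_mem_nhds hu') Set.Ioi_subset_Ici_self
        exact (intervalIntegral.integral_hasDerivAt_right hii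
          ⟨Set.Ici 0, hmem, haesm0⟩
          (hf0cont.continuousAt hmem)).hasDerivWithinAt
    -- derivative of the matrix exponential factor
    have hEder : HasDerivAt (fun r : ℝ => NormedSpace.exp ((-r) • Mᵀ))
        (-(Mᵀ * NormedSpace.exp ((-t) • Mᵀ))) t := by
      have h1 := hasDerivAt_exp_smul_const' (-Mᵀ) t
      have hfun : (fun u : ℝ => NormedSpace.exp (u • (-Mᵀ)))
          = fun u : ℝ => NormedSpace.exp ((-u) • Mᵀ) := by
        funext u; rw [smul_neg, neg_smul]
      have hval : (-Mᵀ) * NormedSpace.exp (t • (-Mᵀ))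
          = -(Mᵀ * NormedSpace.exp ((-t) • Mᵀ)) := by
        rw [smul_neg, ← neg_smul, neg_mul]
      have h2 : HasDerivAt (fun u : ℝ => NormedSpace.exp (u • (-Mᵀ)))
          ((-Mᵀ) * NormedSpace.exp (t • (-Mᵀ))) t := h1
      rw [hfun, hval] at h2
      exact h2
    -- assemble
    have hmain : HasDerivWithinAt
        (fun u => auxLmv n (NormedSpace.exp ((-u) • Mᵀ)) (w 0 - ∫ τ in (0:ℝ)..u, f0 τ))
        (auxLmv n (-(Mᵀ * NormedSpace.exp ((-t) • Mᵀ))) (w 0 - ∫ τ in (0:ℝ)..t, f0 τ)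
          + auxLmv n (NormedSpace.exp ((-t) • Mᵀ)) (-(f0 t)))
        (Set.Ici (0:ℝ)) t := by
      refine HasDerivWithinAt.clm_apply ?_ ?_
      · exact (auxLmv n).hasFDerivAt.comp_hasDerivWithinAt t hEder.hasDerivWithinAt
      · exact (hFTC t ht).const_sub (w 0)
    have hseq : ∀ u ∈ Set.Ici (0:ℝ),
        s u = auxLmv n (NormedSpace.exp ((-u) • Mᵀ)) (w 0 - ∫ τ in (0:ℝ)..u, f0 τ) := by
      intro u hu
      rw [hsw u hu, hwsplit u hu]
      rfl
    have hderiv_eq :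
        auxLmv n (-(Mᵀ * NormedSpace.exp ((-t) • Mᵀ))) (w 0 - ∫ τ in (0:ℝ)..t, f0 τ)
          + auxLmv n (NormedSpace.exp ((-t) • Mᵀ)) (-(f0 t))
        = -(Mᵀ *ᵥ s t) - h t := by
      have hw : w 0 - (∫ τ in (0:ℝ)..t, f0 τ) = w t := (hwsplit t ht).symm
      show (-(Mᵀ * NormedSpace.exp ((-t) • Mᵀ))) *ᵥ (w 0 - ∫ τ in (0:ℝ)..t, f0 τ)
          + NormedSpace.exp ((-t) • Mᵀ) *ᵥ (-(f0 t)) = -(Mᵀ *ᵥ s t) - h t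
      rw [hw, Matrix.neg_mulVec, ← Matrix.mulVec_mulVec, ← hsw t ht]
      have h2 : NormedSpace.exp ((-t) • Mᵀ) *ᵥ (-(f0 t)) = -(h t) := by
        rw [Matrix.mulVec_neg, hf0def]
        dsimp only
        rw [Matrix.mulVec_mulVec, hE0 t, Matrix.one_mulVec]
      rw [h2]
      abel
    have hfinal := hmain.congr hseq (hseq t ht)
    rw [hderiv_eq] at hfinal
    exact hfinal
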